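/- Let k be a field of characteristic p > 2, n a positive integer divisible by p, λ, μ ∈ k, and A an associative unital k-algebra containing elements g, a, b satisfying the H(λ,μ)-relations, and suppose g^{p^m} ≠ 1 in A for every integer m ≥ 1. Then a^{p^m} = λ^{p^{m−1}}·(1 − g^{p^m}) and b^{p^m} = μ^{p^{m−1}}·(1 − g^{p^m}) for all m ≥ 1. Consequently, if λ ≠ 0 then a is not nilpotent, and if μ ≠ 0 then b is not nilpotent; if moreover A is finite dimensional over k and λμ ≠ 0, then neither a nor b lies in the Jacobson radical of A. -/

import Mathlib

/-- In a finite-dimensional algebra over a field, elements of the Jacobson radical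
are nilpotent. -/
lemma aux_jac_nilpotent {k : Type*} [Field k] {A : Type*} [Ring A] [Algebra k A]
    [FiniteDimensional k A] {a : A} (ha : a ∈ (⊥ : Ideal A).jacobson) :
    IsNilpotent a := by
  -- the decreasing chain of ranges of right multiplication by a^m stabilizes
  have hmono : Monotone (fun m : ℕ =>
      OrderDual.toDual (LinearMap.range (LinearMap.mulRight k (a ^ m)))) := by
    intro i j hij
    simp only [OrderDual.toDual_le_toDual]
    rintro _ ⟨x, rfl⟩
    refine ⟨x * a ^ (j - i), ?_⟩
    simp only [LinearMap.mulRight_apply]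
    rw [mul_assoc, ← pow_add, Nat.sub_add_cancel hij]
  obtain ⟨m, hm⟩ := IsArtinian.monotone_stabilizes (R := k) (M := A) ⟨_, hmono⟩
  have hrange : LinearMap.range (LinearMap.mulRight k (a ^ m)) =
      LinearMap.range (LinearMap.mulRight k (a ^ (m + 1))) := by
    have := hm (m + 1) (Nat.le_succ m)
    exact congrArg OrderDual.ofDual this
  have hmem : a ^ m ∈ LinearMap.range (LinearMap.mulRight k (a ^ (m + 1))) := by
    rw [← hrange]; exact ⟨1, by simp⟩
  obtain ⟨x, hx⟩ := hmem
  simp only [LinearMap.mulRight_apply] at hx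
  -- y := x * a lies in the Jacobson radical
  set y : A := x * a with hy
  have hyJ : y ∈ (⊥ : Ideal A).jacobson := by
    have := Ideal.mul_mem_left ((⊥ : Ideal A).jacobson) x ha
    exact this
  -- 1 - y has a left inverse
  have hunit : ∃ u : A, u * (1 - y) = 1 := by
    by_cases hspan : Ideal.span ({1 - y} : Set A) = ⊤
    · have h1 : (1 : A) ∈ Ideal.span ({1 - y} : Set A) := hspan ▸ Submodule.mem_top
      rw [Ideal.span, Submodule.mem_span_singleton] at h1
      obtain ⟨u, hu⟩ := h1
      exact ⟨u, by simpa [smul_eq_mul] using hu⟩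
    · exfalso
      obtain ⟨M, hM, hle⟩ := Ideal.exists_le_maximal _ hspan
      have hJM : (⊥ : Ideal A).jacobson ≤ M := sInf_le ⟨bot_le, hM⟩
      have h1y : (1 - y) ∈ M := hle (Ideal.subset_span (Set.mem_singleton _))
      have hyM : y ∈ M := hJM hyJ
      have : (1 : A) ∈ M := by simpa using M.add_mem h1y hyM
      exact hM.ne_top (M.eq_top_iff_one.2 this)
  obtain ⟨u, hu⟩ := hunit
  refine ⟨m, ?_⟩
  have h0 : (1 - y) * a ^ m = 0 := by
    rw [sub_mul, one_mul, hy, mul_assoc, ← pow_succ']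
    rw [hx]; exact sub_self _
  calc a ^ m = (u * (1 - y)) * a ^ m := by rw [hu, one_mul]
    _ = u * ((1 - y) * a ^ m) := by rw [mul_assoc]
    _ = 0 := by rw [h0, mul_zero]

theorem stmt7 {k : Type*} [Field k] (p : ℕ) [CharP k p] (hp : 2 < p)
    (n : ℕ) (hn : 0 < n) (hpn : p ∣ n) (lam mu : k)
    {A : Type*} [Ring A] [Algebra k A] (g a b : A)
    (hgn : g ^ n = 1) (hag : a * g = g * a) (hbg : b * g = g * a + g * b)
    (hap : a ^ p = lam • ((1 : A) - g ^ p)) (hbp : b ^ p = mu • ((1 : A) - g ^ p))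
    (hba : b * a = a * b + (1 / 2 : k) • a ^ 2)
    (hg1 : ∀ m : ℕ, 1 ≤ m → g ^ (p ^ m) ≠ 1) :
    (∀ m : ℕ, 1 ≤ m → a ^ (p ^ m) = (lam ^ (p ^ (m - 1))) • ((1 : A) - g ^ (p ^ m))) ∧
    (∀ m : ℕ, 1 ≤ m → b ^ (p ^ m) = (mu ^ (p ^ (m - 1))) • ((1 : A) - g ^ (p ^ m))) ∧
    (lam ≠ 0 → ¬ IsNilpotent a) ∧ (mu ≠ 0 → ¬ IsNilpotent b) ∧
    (FiniteDimensional k A → lam * mu ≠ 0 →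
      a ∉ (⊥ : Ideal A).jacobson ∧ b ∉ (⊥ : Ideal A).jacobson) := by
  haveI : Nontrivial A := by
    refine nontrivial_of_ne (g ^ (p ^ 1)) 1 (hg1 1 le_rfl)
  haveI : NeZero p := ⟨by omega⟩
  haveI hFp : Fact p.Prime := CharP.char_is_prime_of_pos k p
  haveI : CharP A p := charP_of_injective_algebraMap (algebraMap k A).injective p
  -- main power computation
  have key : ∀ (c : A) (ν : k), c ^ p = ν • ((1 : A) - g ^ p) →
      ∀ m : ℕ, 1 ≤ m → c ^ (p ^ m) = (ν ^ (p ^ (m - 1))) • ((1 : A) - g ^ (p ^ m)) := by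
    intro c ν hc m hm
    obtain ⟨m', rfl⟩ : ∃ m', m = m' + 1 := ⟨m - 1, by omega⟩
    have hpm : p ^ (m' + 1) = p * p ^ (m' + 1 - 1) := by
      simp [pow_succ, mul_comm]
    rw [hpm, pow_mul, hc, smul_pow]
    congr 1
    rw [sub_pow_char_pow_of_commute p (m' + 1 - 1) (Commute.one_left (g ^ p)), one_pow,
      ← pow_mul, ← hpm]
  have ha' : ∀ m : ℕ, 1 ≤ m →
      a ^ (p ^ m) = (lam ^ (p ^ (m - 1))) • ((1 : A) - g ^ (p ^ m)) := key a lam hap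
  have hb' : ∀ m : ℕ, 1 ≤ m →
      b ^ (p ^ m) = (mu ^ (p ^ (m - 1))) • ((1 : A) - g ^ (p ^ m)) := key b mu hbp
  -- non-nilpotency
  have notnil : ∀ (c : A) (ν : k), ν ≠ 0 →
      (∀ m : ℕ, 1 ≤ m → c ^ (p ^ m) = (ν ^ (p ^ (m - 1))) • ((1 : A) - g ^ (p ^ m))) →
      ¬ IsNilpotent c := by
    rintro c ν hν hc ⟨N, hN⟩
    have hle : N ≤ p ^ (N + 1) := by
      calc N ≤ 2 ^ N := (Nat.lt_two_pow_self (n := N)).le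
        _ ≤ p ^ N := Nat.pow_le_pow_left (by omega) N
        _ ≤ p ^ (N + 1) := Nat.pow_le_pow_right (by omega) (Nat.le_succ N)
    have hc0 : c ^ (p ^ (N + 1)) = 0 := by
      rw [← Nat.sub_add_cancel hle, pow_add, hN, mul_zero]
    rw [hc (N + 1) (by omega)] at hc0
    have hν' : ν ^ (p ^ (N + 1 - 1)) ≠ 0 := pow_ne_zero _ hν
    rcases smul_eq_zero.mp hc0 with h | h
    · exact hν' h
    · exact hg1 (N + 1) (by omega) (by rwa [sub_eq_zero, eq_comm] at h)
  refine ⟨ha', hb', fun h => notnil a lam h ha', fun h => notnil b mu h hb', ?_⟩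
  intro hFD hlm
  have hl : lam ≠ 0 := left_ne_zero_of_mul hlm
  have hm : mu ≠ 0 := right_ne_zero_of_mul hlm
  exact ⟨fun h => notnil a lam hl ha' (aux_jac_nilpotent (k := k) h),
    fun h => notnil b mu hm hb' (aux_jac_nilpotent (k := k) h)⟩
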